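/- If each π_{i+1} : X_{i+1} → X_i is a base-point-preserving submetry with the unique path lifting property, then for every i ∈ ℕ the projection π^∞_i : X_∞ → X_i also has the unique path lifting property; moreover the lift of a rectifiable path γ : [a,b] → X_j starting at x ∈ (π^∞_j)⁻¹(γ(a)) is given coordinatewise by successive lifts in X_i for i > j and by projections for i < j. -/

import Mathlib

open Set

/-- A submetry. -/
def IsSubmetry {X Y : Type*} [MetricSpace X] [MetricSpace Y] (π : X → Y) : Prop :=
  LipschitzWith 1 π ∧
    ∀ (y y' : Y) (x : X), π x = y → ∃ x', π x' = y' ∧ dist x x' = dist y y'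

/-- `γ'` is a lift of `γ : [a,b] → Y` along `π : X → Y`: it is continuous on
`[a,b]`, of finite length (variation), and projects to `γ`. -/
def LiftsOf {X Y : Type*} [PseudoEMetricSpace X] [PseudoEMetricSpace Y]
    (π : X → Y) (γ : ℝ → Y) (γ' : ℝ → X) (a b : ℝ) : Prop :=
  ContinuousOn γ' (Icc a b) ∧ eVariationOn γ' (Icc a b) ≠ ⊤ ∧
    ∀ t ∈ Icc a b, π (γ' t) = γ t

/-- The unique path lifting property: every rectifiable path `γ : [a,b] → Y`
lifts, from every prescribed point of the fiber over `γ a`, to a unique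
continuous finite-length path `γ'` projecting to `γ`, with
`L(γ') ≤ L(γ)`. -/
def HasUniquePathLifting {X Y : Type*} [PseudoEMetricSpace X] [PseudoEMetricSpace Y]
    (π : X → Y) : Prop :=
  ∀ a b : ℝ, a ≤ b → ∀ γ : ℝ → Y, ContinuousOn γ (Icc a b) →
    eVariationOn γ (Icc a b) ≠ ⊤ → ∀ x : X, π x = γ a →
      ∃ γ' : ℝ → X, LiftsOf π γ γ' a b ∧ γ' a = x ∧
        eVariationOn γ' (Icc a b) ≤ eVariationOn γ (Icc a b) ∧
        ∀ η : ℝ → X, LiftsOf π γ η a b → η a = x → ∀ t ∈ Icc a b, η t = γ' t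

/-- The product `∏ i, X i`, as a carrier for the supremum extended distance. -/
def Lim (X : ℕ → Type*) : Type _ := ∀ i, X i

/-- The supremum extended distance on `∏ i, X i`. -/
noncomputable instance Lim.instPseudoEMetricSpace (X : ℕ → Type*)
    [∀ i, PseudoEMetricSpace (X i)] : PseudoEMetricSpace (Lim X) where
  edist x y := ⨆ i, edist (x i) (y i)
  edist_self x := by simp
  edist_comm x y := by simp [edist_comm]
  edist_triangle x y z := by
    refine iSup_le fun i => (edist_triangle (x i) (y i) (z i)).trans ?_
    exact add_le_add (le_iSup (fun i => edist (x i) (y i)) i)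
      (le_iSup (fun i => edist (y i) (z i)) i)

/-- The points of the inverse limit `X_∞`: compatible sequences at bounded
distance from the base point. -/
def memLim (X : ℕ → Type*) [∀ i, PseudoEMetricSpace (X i)]
    (star : ∀ i, X i) (π : ∀ i, X (i + 1) → X i) (x : Lim X) : Prop :=
  (∀ i, π i (x (i + 1)) = x i) ∧ (⨆ i, edist (star i) (x i)) ≠ ⊤

open scoped ENNReal NNReal

theorem evar_Icc_add_Icc {E : Type*} [PseudoEMetricSpace E] (f : ℝ → E) {a b c : ℝ}
    (hab : a ≤ b) (hbc : b ≤ c) :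
    eVariationOn f (Icc a b) + eVariationOn f (Icc b c) = eVariationOn f (Icc a c) := by
  have := eVariationOn.Icc_add_Icc f (s := univ) hab hbc (mem_univ b)
  simpa using this

theorem evar_right {E : Type*} [PseudoEMetricSpace E] {f : ℝ → E} {a b : ℝ} (hab : a ≤ b)
    (hcont : ContinuousOn f (Icc a b)) (hfin : eVariationOn f (Icc a b) ≠ ⊤)
    {ε : ℝ≥0∞} (hε : 0 < ε) :
    ∃ δ > (0:ℝ), ∀ t ∈ Icc a b, t < a + δ → eVariationOn f (Icc a t) ≤ ε := by
  rcases eq_or_ne ε ⊤ with rfl | hεtop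
  · exact ⟨1, one_pos, fun t _ _ => le_top⟩
  set V := eVariationOn f (Icc a b) with hV
  by_cases hVε : V ≤ ε
  · refine ⟨1, one_pos, fun t ht _ => ?_⟩
    exact (eVariationOn.mono f (Icc_subset_Icc le_rfl ht.2)).trans hVε
  push_neg at hVε
  have hV0 : V ≠ 0 := fun h => by simp [h] at hVε
  -- a partition almost attaining the variation
  have hsub : V - ε/2 < V := ENNReal.sub_lt_self hfin hV0 (by
    simp [ENNReal.div_eq_zero_iff, hε.ne'])
  rw [hV, eVariationOn, lt_iSup_iff] at hsub
  obtain ⟨⟨n, u, hu, us⟩, hsum⟩ := hsub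
  have hVsum : V ≤ (∑ i ∈ Finset.range n, edist (f (u (i + 1))) (f (u i))) + ε/2 :=
    tsub_le_iff_right.mp hsum.le
  -- small scale from continuity at `a`
  set ε2 : ℝ≥0∞ := (ε/2) / (4 * (n+1)) with hε2
  have hε2pos : 0 < ε2 := ENNReal.div_pos (by simp [ENNReal.div_eq_zero_iff, hε.ne', hεtop])
    (by finiteness)
  have hcontA : Filter.Tendsto f (nhdsWithin a (Icc a b)) (nhds (f a)) :=
    hcont a ⟨le_rfl, hab⟩
  have hev : ∀ᶠ s in nhdsWithin a (Icc a b), edist (f s) (f a) < ε2 :=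
    (EMetric.tendsto_nhds.mp hcontA) ε2 hε2pos
  obtain ⟨δ, hδpos, hδ⟩ := Metric.mem_nhdsWithin_iff.mp hev
  refine ⟨δ, hδpos, fun t ht htδ => ?_⟩
  have hsmall : ∀ s, s ∈ Icc a b → a ≤ s → s ≤ t → edist (f s) (f a) < ε2 := by
    intro s hs h1 h2
    exact hδ ⟨by rw [Metric.mem_ball, Real.dist_eq, abs_of_nonneg (by linarith)]; linarith, hs⟩
  -- the pushed partition
  set w : ℕ → ℝ := fun k => max t (u k) with hw
  have hwmono : Monotone w := fun i j hij => max_le_max le_rfl (hu hij)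
  have hwmem : ∀ k, w k ∈ Icc t b := fun k => ⟨le_max_left _ _, max_le ht.2 (us k).2⟩
  have hkey : ∀ k, edist (f (w k)) (f (u k)) ≤ 2 * ε2 := by
    intro k
    rcases le_or_gt t (u k) with h | h
    · rw [hw]; simp [max_eq_right h]
    · have hwk : w k = t := max_eq_left h.le
      rw [hwk]
      calc edist (f t) (f (u k)) ≤ edist (f t) (f a) + edist (f a) (f (u k)) :=
            edist_triangle _ _ _
        _ ≤ ε2 + ε2 := by
            refine add_le_add (hsmall t ht ht.1 le_rfl).le ?_
            rw [edist_comm]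
            exact (hsmall (u k) (us k) (us k).1 h.le).le
        _ = 2 * ε2 := (two_mul ε2).symm
  have hterm : ∀ k, edist (f (u (k+1))) (f (u k)) ≤
      edist (f (w (k+1))) (f (w k)) + 4 * ε2 := by
    intro k
    calc edist (f (u (k+1))) (f (u k))
        ≤ edist (f (u (k+1))) (f (w (k+1))) + edist (f (w (k+1))) (f (w k))
            + edist (f (w k)) (f (u k)) := edist_triangle4 _ _ _ _
      _ ≤ 2 * ε2 + edist (f (w (k+1))) (f (w k)) + 2 * ε2 := by
          refine add_le_add (add_le_add ?_ le_rfl) (hkey k)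
          rw [edist_comm]; exact hkey (k+1)
      _ = edist (f (w (k+1))) (f (w k)) + 4 * ε2 := by ring
  have hY : (∑ i ∈ Finset.range n, edist (f (w (i + 1))) (f (w i)))
      ≤ eVariationOn f (Icc t b) := eVariationOn.sum_le (f := f) (n := n) hwmono hwmem
  have hsum2 : (∑ i ∈ Finset.range n, edist (f (u (i + 1))) (f (u i)))
      ≤ eVariationOn f (Icc t b) + ε/2 := by
    calc (∑ i ∈ Finset.range n, edist (f (u (i + 1))) (f (u i)))
        ≤ ∑ i ∈ Finset.range n, (edist (f (w (i + 1))) (f (w i)) + 4 * ε2) :=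
          Finset.sum_le_sum fun i _ => hterm i
      _ = (∑ i ∈ Finset.range n, edist (f (w (i + 1))) (f (w i))) + n * (4 * ε2) := by
          rw [Finset.sum_add_distrib, Finset.sum_const, Finset.card_range, nsmul_eq_mul]
      _ ≤ eVariationOn f (Icc t b) + ε/2 := by
          refine add_le_add hY ?_
          calc (n : ℝ≥0∞) * (4 * ε2) ≤ (n+1) * (4 * ε2) := by
                gcongr; exact le_self_add
            _ = (4 * (n+1)) * ε2 := by ring
            _ = ε/2 := ENNReal.mul_div_cancel (by simp) (by finiteness)
  have hVY : V ≤ eVariationOn f (Icc t b) + ε := by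
    calc V ≤ (∑ i ∈ Finset.range n, edist (f (u (i + 1))) (f (u i))) + ε/2 := hVsum
      _ ≤ (eVariationOn f (Icc t b) + ε/2) + ε/2 := add_le_add hsum2 le_rfl
      _ = eVariationOn f (Icc t b) + ε := by rw [add_assoc, ENNReal.add_halves]
  have hsplit : eVariationOn f (Icc a t) + eVariationOn f (Icc t b) = V :=
    evar_Icc_add_Icc f ht.1 ht.2
  have hYfin : eVariationOn f (Icc t b) ≠ ⊤ :=
    ne_top_of_le_ne_top hfin (eVariationOn.mono f (Icc_subset_Icc ht.1 le_rfl))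
  have := hsplit.le.trans hVY
  rw [add_comm (eVariationOn f (Icc t b)) ε] at this
  exact (ENNReal.add_le_add_iff_right hYfin).mp this

theorem evar_neg_comp {E : Type*} [PseudoEMetricSpace E] (f : ℝ → E) (c d : ℝ) :
    eVariationOn (f ∘ Neg.neg) (Icc c d) = eVariationOn f (Icc (-d) (-c)) := by
  rw [eVariationOn.comp_eq_of_antitoneOn f Neg.neg (fun x _ y _ h => neg_le_neg h)]
  congr 1
  have : (Neg.neg '' Icc c d : Set ℝ) = Icc (-d) (-c) := by
    rw [show (Neg.neg '' Icc c d : Set ℝ) = -(Icc c d) from Set.image_neg_eq_neg, Set.neg_Icc]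
  rw [this]

theorem evar_left {E : Type*} [PseudoEMetricSpace E] {f : ℝ → E} {a b : ℝ} (hab : a ≤ b)
    (hcont : ContinuousOn f (Icc a b)) (hfin : eVariationOn f (Icc a b) ≠ ⊤)
    {ε : ℝ≥0∞} (hε : 0 < ε) :
    ∃ δ > (0:ℝ), ∀ s ∈ Icc a b, b - δ < s → eVariationOn f (Icc s b) ≤ ε := by
  have hab' : -b ≤ -a := neg_le_neg hab
  have hcont' : ContinuousOn (f ∘ Neg.neg) (Icc (-b) (-a)) := by
    refine hcont.comp continuous_neg.continuousOn ?_
    intro x hx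
    exact ⟨by simpa using neg_le_neg hx.2, by simpa using neg_le_neg hx.1⟩
  have hfin' : eVariationOn (f ∘ Neg.neg) (Icc (-b) (-a)) ≠ ⊤ := by
    rw [evar_neg_comp]; simpa using hfin
  obtain ⟨δ, hδpos, hδ⟩ := evar_right hab' hcont' hfin' hε
  refine ⟨δ, hδpos, fun s hs hsδ => ?_⟩
  have := hδ (-s) ⟨neg_le_neg hs.2, neg_le_neg hs.1⟩ (by linarith)
  rwa [evar_neg_comp, neg_neg, neg_neg] at this

theorem evar_near {E : Type*} [PseudoEMetricSpace E] {f : ℝ → E} {a b : ℝ} (hab : a ≤ b)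
    (hcont : ContinuousOn f (Icc a b)) (hfin : eVariationOn f (Icc a b) ≠ ⊤)
    {c : ℝ} (hc : c ∈ Icc a b) {ε : ℝ≥0∞} (hε : 0 < ε) :
    ∃ δ > (0:ℝ), ∀ s t, s ∈ Icc a b → t ∈ Icc a b → |s - c| < δ → |t - c| < δ → s ≤ t →
      eVariationOn f (Icc s t) ≤ ε := by
  have hε2 : (0:ℝ≥0∞) < ε/2 := ENNReal.div_pos hε.ne' (by norm_num)
  have hcont1 : ContinuousOn f (Icc c b) := hcont.mono (Icc_subset_Icc hc.1 le_rfl)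
  have hfin1 : eVariationOn f (Icc c b) ≠ ⊤ :=
    ne_top_of_le_ne_top hfin (eVariationOn.mono f (Icc_subset_Icc hc.1 le_rfl))
  have hcont2 : ContinuousOn f (Icc a c) := hcont.mono (Icc_subset_Icc le_rfl hc.2)
  have hfin2 : eVariationOn f (Icc a c) ≠ ⊤ :=
    ne_top_of_le_ne_top hfin (eVariationOn.mono f (Icc_subset_Icc le_rfl hc.2))
  obtain ⟨δ₁, hδ₁pos, hδ₁⟩ := evar_right hc.2 hcont1 hfin1 hε2
  obtain ⟨δ₂, hδ₂pos, hδ₂⟩ := evar_left hc.1 hcont2 hfin2 hε2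
  refine ⟨min δ₁ δ₂, lt_min hδ₁pos hδ₂pos, fun s t hsm htm hs ht hst => ?_⟩
  rw [abs_sub_lt_iff] at hs ht
  rcases le_total c s with h | h
  · refine le_trans (eVariationOn.mono f (Icc_subset_Icc h le_rfl)) ?_
    refine le_trans (hδ₁ t ⟨h.trans hst, htm.2⟩ ?_) (ENNReal.half_le_self)
    have := lt_min_iff.mp ht.1
    linarith [this.1]
  rcases le_total t c with h' | h'
  · refine le_trans (eVariationOn.mono f (Icc_subset_Icc le_rfl h')) ?_
    refine le_trans (hδ₂ s ⟨hsm.1, h⟩ ?_) (ENNReal.half_le_self)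
    have := lt_min_iff.mp hs.2
    linarith [this.2]
  · rw [← evar_Icc_add_Icc f h h']
    calc eVariationOn f (Icc s c) + eVariationOn f (Icc c t)
        ≤ ε/2 + ε/2 := add_le_add
          (hδ₂ s ⟨hsm.1, h⟩ (by have := lt_min_iff.mp hs.2; linarith [this.2]))
          (hδ₁ t ⟨h', htm.2⟩ (by have := lt_min_iff.mp ht.1; linarith [this.1]))
      _ = ε := ENNReal.add_halves ε



theorem evar_telescope {E : Type*} [PseudoEMetricSpace E] (γ : ℝ → E) (u : ℕ → ℝ)
    (hu : Monotone u) :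
    ∀ n, (∑ k ∈ Finset.range n, eVariationOn γ (Icc (u k) (u (k+1))))
      = eVariationOn γ (Icc (u 0) (u n))
  | 0 => by
      rw [Finset.range_zero, Finset.sum_empty, Icc_self,
        eVariationOn.subsingleton γ subsingleton_singleton]
  | (n+1) => by
      rw [Finset.sum_range_succ, evar_telescope γ u hu n,
        evar_Icc_add_Icc γ (hu (Nat.zero_le n)) (hu n.le_succ)]

theorem evar_le_of_forall_edist_le {E F : Type*} [PseudoEMetricSpace E] [PseudoEMetricSpace F]
    {f : ℝ → F} {γ : ℝ → E} {a b : ℝ}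
    (h : ∀ s t, s ∈ Icc a b → t ∈ Icc a b → s ≤ t → edist (f s) (f t) ≤ eVariationOn γ (Icc s t)) :
    eVariationOn f (Icc a b) ≤ eVariationOn γ (Icc a b) := by
  apply iSup_le
  rintro ⟨n, u, hu, us⟩
  calc (∑ k ∈ Finset.range n, edist (f (u (k+1))) (f (u k)))
      ≤ ∑ k ∈ Finset.range n, eVariationOn γ (Icc (u k) (u (k+1))) := by
        refine Finset.sum_le_sum fun k _ => ?_
        rw [edist_comm]
        exact h (u k) (u (k+1)) (us k) (us (k+1)) (hu k.le_succ)
    _ = eVariationOn γ (Icc (u 0) (u n)) := evar_telescope γ u hu n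
    _ ≤ eVariationOn γ (Icc a b) :=
        eVariationOn.mono γ (Icc_subset_Icc (us 0).1 (us n).2)

theorem cont_of_forall_edist_le {E F : Type*} [PseudoEMetricSpace E] [PseudoEMetricSpace F]
    {f : ℝ → F} {γ : ℝ → E} {a b : ℝ} (hab : a ≤ b)
    (hγc : ContinuousOn γ (Icc a b)) (hγv : eVariationOn γ (Icc a b) ≠ ⊤)
    (h : ∀ s t, s ∈ Icc a b → t ∈ Icc a b → s ≤ t → edist (f s) (f t) ≤ eVariationOn γ (Icc s t)) :
    ContinuousOn f (Icc a b) := by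
  intro c hc
  have : Filter.Tendsto f (nhdsWithin c (Icc a b)) (nhds (f c)) := by
    rw [EMetric.tendsto_nhds]
    intro ε hε
    obtain ⟨ε', hε'0, hε'ε⟩ := exists_between hε
    obtain ⟨δ, hδpos, hδ⟩ := evar_near hab hγc hγv hc hε'0
    rw [Filter.eventually_iff]
    refine Metric.mem_nhdsWithin_iff.mpr ⟨δ, hδpos, ?_⟩
    rintro s ⟨hball, hsIcc⟩
    have hd : |s - c| < δ := by rw [← Real.dist_eq]; exact Metric.mem_ball.mp hball
    have hd0 : |c - c| < δ := by simpa using hδpos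
    rcases le_total s c with h1 | h1
    · exact lt_of_le_of_lt (le_trans (h s c hsIcc hc h1)
        (hδ s c hsIcc hc hd hd0 h1)) hε'ε
    · refine lt_of_le_of_lt (le_trans ?_ (hδ c s hc hsIcc hd0 hd h1)) hε'ε
      rw [edist_comm]
      exact h c s hc hsIcc h1
  exact this

section SeqDown
variable {X : ℕ → Type*} (π : ∀ i, X (i+1) → X i)

/-- iterated projection from level `k` down to level `i`. -/
def seqDown (i : ℕ) (k : ℕ) (h : i ≤ k) : X k → X i :=
  Nat.leRecOn (C := fun k => X k → X i) h (fun f => f ∘ π _) id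

theorem seqDown_self (i : ℕ) (h : i ≤ i) (x : X i) : seqDown π i i h x = x := by
  simp [seqDown, Nat.leRecOn_self]

theorem seqDown_succ (i k : ℕ) (h : i ≤ k + 1) (h' : i ≤ k) (x : X (k+1)) :
    seqDown π i (k+1) h x = seqDown π i k h' (π k x) := by
  have : h = Nat.le_succ_of_le h' := rfl
  rw [this, seqDown, Nat.leRecOn_succ h']
  rfl

theorem seqDown_lip [∀ i, MetricSpace (X i)] (hl : ∀ i, LipschitzWith 1 (π i)) (i k : ℕ)
    (h : i ≤ k) : LipschitzWith 1 (seqDown π i k h) := by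
  induction k, h using Nat.le_induction with
  | base => have hid : LipschitzWith 1 (fun x : X i => x) := LipschitzWith.id; simpa [funext fun x => seqDown_self π i le_rfl x] using hid
  | succ k h ih =>
      have : seqDown π i (k+1) (Nat.le_succ_of_le h) = (seqDown π i k h) ∘ (π k) := by
        funext x; exact seqDown_succ π i k _ h x
      rw [this]; simpa using ih.comp (hl k)

theorem seqDown_compat {y : ∀ i, X i} (hy : ∀ i, π i (y (i+1)) = y i) (i k : ℕ) (h : i ≤ k) :
    seqDown π i k h (y k) = y i := by
  induction k, h using Nat.le_induction with
  | base => exact seqDown_self π i le_rfl _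
  | succ k h ih => rw [seqDown_succ π i k _ h, hy k, ih]

theorem seqDown_peel (i k : ℕ) (h : i + 1 ≤ k) (h' : i ≤ k) (y : X k) :
    π i (seqDown π (i+1) k h y) = seqDown π i k h' y := by
  induction k, h using Nat.le_induction with
  | base =>
      rw [seqDown_self, seqDown_succ π i i h' le_rfl, seqDown_self]
  | succ k h ih =>
      rw [seqDown_succ π (i+1) k _ h, seqDown_succ π i k h' (Nat.le_of_succ_le h), ih]

end SeqDown

section Chain

variable {X : ℕ → Type*} [∀ i, MetricSpace (X i)] (π : ∀ i, X (i + 1) → X i)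

/-- the inductive property carried by the coordinates of the canonical lift -/
def ChainProp {j : ℕ} (a b : ℝ) (γ : ℝ → X j) (x : Lim X) (i : ℕ) (f : ℝ → X i) : Prop :=
  ContinuousOn f (Icc a b) ∧
    (∀ s t, s ∈ Icc a b → t ∈ Icc a b →
      eVariationOn f (Icc s t) ≤ eVariationOn γ (Icc s t)) ∧
    f a = x i

theorem chainProp_down {j : ℕ} {a b : ℝ} {γ : ℝ → X j} {x : Lim X}
    (hγc : ContinuousOn γ (Icc a b)) (hx : x j = γ a)
    (hxc : ∀ i, π i (x (i + 1)) = x i) (hπl : ∀ i, LipschitzWith 1 (π i))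
    (i : ℕ) (h : i ≤ j) : ChainProp a b γ x i (seqDown π i j h ∘ γ) := by
  refine ⟨(seqDown_lip π hπl i j h).continuous.comp_continuousOn hγc, fun s t hs ht => ?_, ?_⟩
  · have := ((seqDown_lip π hπl i j h).lipschitzOnWith (s := univ)).comp_eVariationOn_le
      (mapsTo_univ γ (Icc s t))
    simpa using this
  · show seqDown π i j h (γ a) = x i
    rw [← hx]
    exact seqDown_compat π hxc i j h

theorem chain_lift_step {j : ℕ} {a b : ℝ} {γ : ℝ → X j} {x : Lim X} (hab : a ≤ b)
    (hγv : eVariationOn γ (Icc a b) ≠ ⊤)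
    (hπlift : ∀ i, HasUniquePathLifting (π i))
    (i : ℕ) (f : ℝ → X i) (hf : ChainProp a b γ x i f) (hstart : π i (x (i+1)) = f a) :
    ∃ g : ℝ → X (i+1), ChainProp a b γ x (i+1) g ∧ (∀ t ∈ Icc a b, π i (g t) = f t) ∧
      (∀ η : ℝ → X (i+1), LiftsOf (π i) f η a b → η a = x (i+1) →
        ∀ t ∈ Icc a b, η t = g t) := by
  have haI : a ∈ Icc a b := ⟨le_rfl, hab⟩
  have hbI : b ∈ Icc a b := ⟨hab, le_rfl⟩
  have hfv : eVariationOn f (Icc a b) ≠ ⊤ :=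
    ne_top_of_le_ne_top hγv (hf.2.1 a b haI hbI)
  obtain ⟨g, hgl, hga, hgv, hguniq⟩ := hπlift i a b hab f hf.1 hfv (x (i+1)) hstart
  refine ⟨g, ⟨hgl.1, fun s t hs ht => ?_, hga⟩, hgl.2.2, hguniq⟩
  rcases le_total s t with hst | hst
  · have hsub : Icc s t ⊆ Icc a b := Icc_subset_Icc hs.1 ht.2
    have hfc' : ContinuousOn f (Icc s t) := hf.1.mono hsub
    have hfv' : eVariationOn f (Icc s t) ≠ ⊤ :=
      ne_top_of_le_ne_top hγv ((hf.2.1 s t hs ht).trans (eVariationOn.mono γ hsub))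
    obtain ⟨h₂, hl₂, ha₂, hv₂, hu₂⟩ := hπlift i s t hst f hfc' hfv' (g s) (hgl.2.2 s hs)
    have hgsub : LiftsOf (π i) f g s t := by
      refine ⟨hgl.1.mono hsub, ?_, fun u hu => hgl.2.2 u (hsub hu)⟩
      exact ne_top_of_le_ne_top (ne_top_of_le_ne_top hγv (hgv.trans (hf.2.1 a b haI hbI)))
        (eVariationOn.mono g hsub)
    have heq : EqOn g h₂ (Icc s t) := fun u hu => hu₂ g hgsub rfl u hu
    calc eVariationOn g (Icc s t) = eVariationOn h₂ (Icc s t) := eVariationOn.eq_of_eqOn heq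
      _ ≤ eVariationOn f (Icc s t) := hv₂
      _ ≤ eVariationOn γ (Icc s t) := hf.2.1 s t hs ht
  · rw [eVariationOn.subsingleton g (Set.subsingleton_Icc_of_ge hst)]
    exact zero_le

/-- the canonical chain of coordinate lifts -/
noncomputable def chain {j : ℕ} {a b : ℝ} {γ : ℝ → X j} {x : Lim X} (hab : a ≤ b)
    (hγc : ContinuousOn γ (Icc a b)) (hγv : eVariationOn γ (Icc a b) ≠ ⊤)
    (hx : x j = γ a) (hxc : ∀ i, π i (x (i + 1)) = x i)
    (hπl : ∀ i, LipschitzWith 1 (π i)) (hπlift : ∀ i, HasUniquePathLifting (π i)) :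
    ∀ i : ℕ, {f : ℝ → X i // ChainProp a b γ x i f}
  | 0 => ⟨seqDown π 0 j (Nat.zero_le j) ∘ γ,
      chainProp_down π hγc hx hxc hπl 0 (Nat.zero_le j)⟩
  | (i+1) =>
      if h : i + 1 ≤ j then
        ⟨seqDown π (i+1) j h ∘ γ, chainProp_down π hγc hx hxc hπl (i+1) h⟩
      else
        ⟨Classical.choose (chain_lift_step π hab hγv hπlift i
            (chain hab hγc hγv hx hxc hπl hπlift i).1
            (chain hab hγc hγv hx hxc hπl hπlift i).2
            ((hxc i).trans (chain hab hγc hγv hx hxc hπl hπlift i).2.2.2.symm)),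
          (Classical.choose_spec (chain_lift_step π hab hγv hπlift i
            (chain hab hγc hγv hx hxc hπl hπlift i).1
            (chain hab hγc hγv hx hxc hπl hπlift i).2
            ((hxc i).trans (chain hab hγc hγv hx hxc hπl hπlift i).2.2.2.symm))).1⟩

end Chain

section Chain2
variable {X : ℕ → Type*} [∀ i, MetricSpace (X i)] {π : ∀ i, X (i + 1) → X i}
  {j : ℕ} {a b : ℝ} {γ : ℝ → X j} {x : Lim X} {hab : a ≤ b}
  {hγc : ContinuousOn γ (Icc a b)} {hγv : eVariationOn γ (Icc a b) ≠ ⊤}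
  {hx : x j = γ a} {hxc : ∀ i, π i (x (i + 1)) = x i}
  {hπl : ∀ i, LipschitzWith 1 (π i)} {hπlift : ∀ i, HasUniquePathLifting (π i)}

theorem chain_of_le (i : ℕ) (h : i ≤ j) :
    (chain (π := π) hab hγc hγv hx hxc hπl hπlift i).1 = seqDown π i j h ∘ γ := by
  match i with
  | 0 => rfl
  | (i+1) => simp only [chain, dif_pos h]

theorem chain_succ_compat (i : ℕ) :
    ∀ t ∈ Icc a b, π i ((chain (π := π) hab hγc hγv hx hxc hπl hπlift (i+1)).1 t)
      = (chain (π := π) hab hγc hγv hx hxc hπl hπlift i).1 t := by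
  intro t ht
  by_cases h : i + 1 ≤ j
  · rw [chain_of_le (i+1) h, chain_of_le i (Nat.le_of_succ_le h)]
    exact seqDown_peel π i j h (Nat.le_of_succ_le h) (γ t)
  · show π i ((if h : i + 1 ≤ j then _ else _ : {f : ℝ → X (i+1) // _}).1 t) = _
    rw [dif_neg h]
    exact (Classical.choose_spec (chain_lift_step π hab hγv hπlift i
      (chain (π := π) hab hγc hγv hx hxc hπl hπlift i).1
      (chain (π := π) hab hγc hγv hx hxc hπl hπlift i).2
      ((hxc i).trans (chain (π := π) hab hγc hγv hx hxc hπl hπlift i).2.2.2.symm))).2.1 t ht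

theorem chain_succ_uniq (i : ℕ) (h : ¬ (i + 1 ≤ j)) :
    ∀ η : ℝ → X (i+1),
      LiftsOf (π i) (chain (π := π) hab hγc hγv hx hxc hπl hπlift i).1 η a b →
      η a = x (i+1) →
      ∀ t ∈ Icc a b, η t = (chain (π := π) hab hγc hγv hx hxc hπl hπlift (i+1)).1 t := by
  intro η hη hηa t ht
  show η t = (if h : i + 1 ≤ j then _ else _ : {f : ℝ → X (i+1) // _}).1 t
  rw [dif_neg h]
  exact (Classical.choose_spec (chain_lift_step π hab hγv hπlift i
    (chain (π := π) hab hγc hγv hx hxc hπl hπlift i).1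
    (chain (π := π) hab hγc hγv hx hxc hπl hπlift i).2
    ((hxc i).trans (chain (π := π) hab hγc hγv hx hxc hπl hπlift i).2.2.2.symm))).2.2 η hη hηa t ht

end Chain2

/-- If each `π_{i+1} : X_{i+1} → X_i` is a base-point-preserving submetry with
the unique path lifting property, then each projection `π^∞_j : X_∞ → X_j`
has the unique path lifting property; moreover for any lift `Γ` of a
rectifiable path `γ` in `X_j`, the coordinates of `Γ` are successive lifts
(and, by compatibility, projections in the coordinates below `j`). -/
theorem stmt11
    (X : ℕ → Type*) [∀ i, MetricSpace (X i)] [∀ i, Nonempty (X i)]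
    (star : ∀ i, X i)
    (π : ∀ i, X (i + 1) → X i)
    (hπstar : ∀ i, π i (star (i + 1)) = star i)
    (hπsub : ∀ i, IsSubmetry (π i))
    (hπlift : ∀ i, HasUniquePathLifting (π i)) :
    ∀ j : ℕ,
      HasUniquePathLifting
        (fun x : {x : Lim X // memLim X star π x} => x.1 j) ∧
      ∀ (a b : ℝ), a ≤ b → ∀ γ : ℝ → X j, ContinuousOn γ (Icc a b) →
        eVariationOn γ (Icc a b) ≠ ⊤ →
        ∀ Γ : ℝ → {x : Lim X // memLim X star π x},
          LiftsOf (fun x : {x : Lim X // memLim X star π x} => x.1 j) γ Γ a b →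
          ∀ i, LiftsOf (π i) (fun t => (Γ t).1 i) (fun t => (Γ t).1 (i + 1)) a b := by
  have hπl : ∀ i, LipschitzWith 1 (π i) := fun i => (hπsub i).1
  have coordLip : ∀ i, LipschitzWith 1
      (fun y : {x : Lim X // memLim X star π x} => y.1 i) := by
    intro i y z
    have hle : edist (y.1 i) (z.1 i) ≤ edist y z := le_iSup (fun k => edist (y.1 k) (z.1 k)) i
    simpa using hle
  have coordLift : ∀ (a b : ℝ) (Γ : ℝ → {x : Lim X // memLim X star π x}),
      ContinuousOn Γ (Icc a b) → eVariationOn Γ (Icc a b) ≠ ⊤ →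
      ∀ i, LiftsOf (π i) (fun t => (Γ t).1 i) (fun t => (Γ t).1 (i + 1)) a b := by
    intro a b Γ hc hv i
    refine ⟨(coordLip (i+1)).continuous.comp_continuousOn hc, ?_, fun t ht => (Γ t).2.1 i⟩
    have h1 := ((coordLip (i+1)).lipschitzOnWith (s := univ)).comp_eVariationOn_le
      (mapsTo_univ Γ (Icc a b))
    refine ne_top_of_le_ne_top ?_ h1
    simpa using hv
  intro j
  refine ⟨?_, fun a b hab γ hγc hγv Γ hΓ i => coordLift a b Γ hΓ.1 hΓ.2.1 i⟩
  intro a b hab γ hγc hγv x hx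
  have hx' : x.1 j = γ a := hx
  set c := chain (π := π) hab hγc hγv hx' x.2.1 hπl hπlift with hcdef
  have Hcompat : ∀ i, ∀ t ∈ Icc a b, π i ((c (i+1)).1 t) = (c i).1 t :=
    fun i t ht => chain_succ_compat i t ht
  have Huniq : ∀ i, ¬(i+1 ≤ j) → ∀ η', LiftsOf (π i) (c i).1 η' a b →
      η' a = x.1 (i+1) → ∀ t ∈ Icc a b, η' t = (c (i+1)).1 t :=
    fun i h => chain_succ_uniq i h
  have Hle : ∀ i (h : i ≤ j), (c i).1 = seqDown π i j h ∘ γ := fun i h => chain_of_le i h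
  have hchainj : ∀ t, (c j).1 t = γ t := by
    intro t
    rw [Hle j le_rfl]
    exact seqDown_self π j le_rfl (γ t)
  set cl : ℝ → ℝ := fun t => max a (min b t) with hcl
  have hclmem : ∀ t, cl t ∈ Icc a b :=
    fun t => ⟨le_max_left _ _, max_le hab (min_le_left _ _)⟩
  have hclid : ∀ t ∈ Icc a b, cl t = t := by
    intro t ht
    rw [hcl]
    simp only
    rw [min_eq_right ht.2, max_eq_right ht.1]
  have haI : a ∈ Icc a b := ⟨le_rfl, hab⟩
  have hbI : b ∈ Icc a b := ⟨hab, le_rfl⟩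
  have hmem : ∀ t, memLim X star π (fun i => (c i).1 (cl t)) := by
    intro t
    constructor
    · exact fun i => Hcompat i (cl t) (hclmem t)
    · refine ne_top_of_le_ne_top (ENNReal.add_ne_top.2 ⟨x.2.2, hγv⟩) ?_
      refine iSup_le fun i => ?_
      refine le_trans (edist_triangle _ (x.1 i) _)
        (add_le_add (le_iSup (fun k => edist (star k) (x.1 k)) i) ?_)
      have h1 : edist (x.1 i) ((c i).1 (cl t)) = edist ((c i).1 a) ((c i).1 (cl t)) := by
        rw [(c i).2.2.2]
      rw [h1]
      exact le_trans (eVariationOn.edist_le _ haI (hclmem t)) ((c i).2.2.1 a b haI hbI)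
  set Γ : ℝ → {y : Lim X // memLim X star π y} :=
    fun t => ⟨fun i => (c i).1 (cl t), hmem t⟩ with hΓdef
  have hcoordval : ∀ t ∈ Icc a b, ∀ i, (Γ t).1 i = (c i).1 t := by
    intro t ht i
    show (c i).1 (cl t) = (c i).1 t
    rw [hclid t ht]
  have hedist : ∀ s t, s ∈ Icc a b → t ∈ Icc a b → s ≤ t →
      edist (Γ s) (Γ t) ≤ eVariationOn γ (Icc s t) := by
    intro s t hs ht hst
    have h0 : edist (Γ s) (Γ t) = ⨆ i, edist ((Γ s).1 i) ((Γ t).1 i) := rfl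
    rw [h0]
    refine iSup_le fun i => ?_
    rw [hcoordval s hs i, hcoordval t ht i]
    refine le_trans (eVariationOn.edist_le _ (Set.mem_Icc.mpr ⟨le_rfl, hst⟩)
      (Set.mem_Icc.mpr ⟨hst, le_rfl⟩)) ?_
    exact (c i).2.2.1 s t hs ht
  have hΓcont : ContinuousOn Γ (Icc a b) := cont_of_forall_edist_le hab hγc hγv hedist
  have hΓvar : eVariationOn Γ (Icc a b) ≤ eVariationOn γ (Icc a b) :=
    evar_le_of_forall_edist_le hedist
  have hΓvarfin : eVariationOn Γ (Icc a b) ≠ ⊤ := ne_top_of_le_ne_top hγv hΓvar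
  refine ⟨Γ, ⟨hΓcont, hΓvarfin, fun t ht => ?_⟩, ?_, hΓvar, ?_⟩
  · show (Γ t).1 j = γ t
    rw [hcoordval t ht j, hchainj]
  · apply Subtype.ext
    funext i
    show (Γ a).1 i = x.1 i
    rw [hcoordval a haI i]
    exact (c i).2.2.2
  · intro η hη hηa t ht
    have hηj : ∀ t ∈ Icc a b, (η t).1 j = γ t := fun t ht => hη.2.2 t ht
    have key : ∀ i, ∀ t ∈ Icc a b, (η t).1 i = (c i).1 t := by
      have up : ∀ i, j ≤ i → ∀ t ∈ Icc a b, (η t).1 i = (c i).1 t := by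
        intro i hi
        induction i, hi using Nat.le_induction with
        | base =>
            intro t ht
            rw [hchainj t]
            exact hηj t ht
        | succ i hi ih =>
            intro t ht
            have hlift : LiftsOf (π i) (c i).1 (fun u => (η u).1 (i+1)) a b := by
              have hcl2 := coordLift a b η hη.1 hη.2.1 i
              refine ⟨hcl2.1, hcl2.2.1, fun u hu => ?_⟩
              rw [hcl2.2.2 u hu]
              exact ih u hu
            have hstart : (fun u => (η u).1 (i+1)) a = x.1 (i+1) := by
              show (η a).1 (i+1) = x.1 (i+1)
              rw [hηa]
            exact Huniq i (by omega) _ hlift hstart t ht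
      intro i
      rcases le_or_gt j i with hji | hij
      · exact up i hji
      · intro t ht
        have hd := seqDown_compat π (η t).2.1 i j hij.le
        calc (η t).1 i = seqDown π i j hij.le ((η t).1 j) := hd.symm
          _ = seqDown π i j hij.le (γ t) := by rw [hηj t ht]
          _ = (c i).1 t := by rw [Hle i hij.le]; rfl
    apply Subtype.ext
    funext i
    show (η t).1 i = (Γ t).1 i
    rw [hcoordval t ht i]
    exact key i t ht
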